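/- arXiv:1701.08409 — 2 statements merged into one kernel-verified Lean document; each statement's English description precedes it below -/
import Mathlib

section
/- Let k > 1 and j ≥ 1 be fixed integers, let F : 𝔽₂ʲ → 𝔽₂ be a Boolean function, let k̄ = 2⌊k/2⌋ + 1 with 2-adic expansion k̄ = 2^{a_s} + ⋯ + 2^{a₁} + 1 (0 < a₁ < ⋯ < a_s), and let ε(k) = 0 if k is a power of 2 and 1 otherwise. Define b_n = Σ_{l=0}^{n} ( Σ_{m=0}^{j} C_m(F)(-1)^{C(l+m,k)} ) C(n,l), which equals S(σ_{n+j,k} + F) for n + j ≥ k. Then (b_n)_{n≥1} satisfies the homogeneous linear recurrence whose characteristic polynomial is f(X) = (X−2)^{ε(k)} Π_{l=1}^{s} Φ_{2^{a_l+1}}(X−1). Moreover, if F is balanced (i.e. S(F) = 0), then (b_n)_{n≥1} satisfies the homogeneous linear recurrence whose characteristic polynomial is Π_{l=1}^{s} Φ_{2^{a_l+1}}(X−1), which has degree k̄ − 1 = 2^{a_s} + ⋯ + 2^{a₁}. -/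
/-- Exponential sum of a Boolean function in `N` variables. -/
def expSum {N : ℕ} (G : (Fin N → ZMod 2) → ZMod 2) : ℤ :=
  ∑ x : Fin N → ZMod 2, (-1 : ℤ) ^ (G x).val

/-- Elementary symmetric Boolean polynomial of degree `k` in `n` variables. -/
def sigma (n k : ℕ) (x : Fin n → ZMod 2) : ZMod 2 :=
  ∑ A ∈ Finset.powersetCard k (Finset.univ : Finset (Fin n)), ∏ i ∈ A, x i

/-- Hamming weight of a Boolean vector. -/
def wt {j : ℕ} (x : Fin j → ZMod 2) : ℕ :=
  (Finset.univ.filter (fun i => x i = 1)).card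

/-- The weight-coefficients `C_m(F) = Σ_{wt(x)=m} (-1)^{F(x)}` of a Boolean function. -/
def coefC {j : ℕ} (F : (Fin j → ZMod 2) → ZMod 2) (m : ℕ) : ℤ :=
  ∑ x ∈ Finset.univ.filter (fun x : Fin j → ZMod 2 => wt x = m), (-1 : ℤ) ^ (F x).val

section AuxPerturbation

open Polynomial


/-- bits of k are contained in bits of l -/
def bitSub (k l : ℕ) : Prop := ∀ i, k.testBit i = true → l.testBit i = true

lemma bitSub_iff_and (k l : ℕ) : bitSub k l ↔ k &&& l = k := by
  constructor
  · intro h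
    apply Nat.eq_of_testBit_eq
    intro i
    rw [Nat.testBit_and]
    rcases Bool.eq_false_or_eq_true (k.testBit i) with h' | h' <;> simp [h']
    exact h i h'
  · intro h i hi
    have := congrArg (fun m => Nat.testBit m i) h
    simp only [Nat.testBit_and, hi, Bool.true_and] at this
    exact this

instance : ∀ k l, Decidable (bitSub k l) := fun k l =>
  decidable_of_iff _ (bitSub_iff_and k l).symm

lemma choose_parity (l : ℕ) : ∀ k, l.choose k % 2 = if bitSub k l then 1 else 0 := by
  induction l using Nat.strong_induction_on with
  | _ l IH =>
    intro k
    rcases Nat.eq_zero_or_pos l with hl | hl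
    · subst hl
      rcases Nat.eq_zero_or_pos k with hk | hk
      · subst hk; simp [bitSub]
      · rw [Nat.choose_eq_zero_of_lt hk]
        have : ¬ bitSub k 0 := by
          intro h
          have : k = 0 := Nat.eq_of_testBit_eq (fun i => by
            rcases Bool.eq_false_or_eq_true (k.testBit i) with h' | h'
            · simp [h', h i h', Nat.zero_testBit]
            · simp [h', Nat.zero_testBit])
          omega
        simp [this]
    · have key : l.choose k % 2 = (Nat.choose (l % 2) (k % 2) * Nat.choose (l / 2) (k / 2)) % 2 :=
        @Choose.choose_modEq_choose_mod_mul_choose_div_nat l k 2 ⟨Nat.prime_two⟩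
      rw [key, Nat.mul_mod, IH (l / 2) (by omega) (k / 2)]
      have hsplit : bitSub k l ↔ ((k % 2 = 1 → l % 2 = 1) ∧ bitSub (k / 2) (l / 2)) := by
        constructor
        · intro h
          constructor
          · intro hk1
            have := h 0 (by simp [Nat.testBit_eq_decide_div_mod_eq, hk1])
            simpa [Nat.testBit_eq_decide_div_mod_eq] using this
          · intro i hi
            have := h (i + 1) (by rwa [Nat.testBit_succ])
            rwa [Nat.testBit_succ] at this
        · rintro ⟨h0, hs⟩ i hi
          cases i with
          | zero =>
            simp only [Nat.testBit_eq_decide_div_mod_eq, pow_zero, Nat.div_one, decide_eq_true_eq] at hi ⊢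
            exact h0 hi
          | succ i =>
            rw [Nat.testBit_succ] at hi ⊢
            exact hs i hi
      by_cases hb : bitSub k l
      · rw [if_pos hb]
        rw [hsplit] at hb
        obtain ⟨h0, hs⟩ := hb
        rw [if_pos hs]
        have h2 : Nat.choose (l % 2) (k % 2) % 2 = 1 := by
          have hl2 : l % 2 = 0 ∨ l % 2 = 1 := by omega
          have hk2 : k % 2 = 0 ∨ k % 2 = 1 := by omega
          rcases hl2 with h | h <;> rcases hk2 with h' | h' <;> simp [h, h'] <;> omega
        rw [h2]
      · rw [if_neg hb]
        rw [hsplit] at hb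
        by_cases hs : bitSub (k / 2) (l / 2)
        · have h01 : ¬ (k % 2 = 1 → l % 2 = 1) := fun h => hb ⟨h, hs⟩
          push_neg at h01
          have hk1 : k % 2 = 1 := h01.1
          have hl1 : l % 2 = 0 := by omega
          rw [hk1, hl1]
          simp
        · rw [if_neg hs]
          simp

lemma testBit_add_pow_lt {i t : ℕ} (h : i < t) (l : ℕ) :
    (l + 2 ^ t).testBit i = l.testBit i := by
  have h1 : 2 ^ t = 2 ^ (t - i) * 2 ^ i := by rw [← pow_add]; congr 1; omega
  have h2 : (l + 2 ^ t) / 2 ^ i = l / 2 ^ i + 2 ^ (t - i) := by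
    rw [h1, Nat.add_mul_div_right _ _ (Nat.pow_pos (n := i) (by norm_num))]
  have h3 : 2 ^ (t - i) % 2 = 0 := by
    have : 2 ^ (t - i) = 2 * 2 ^ (t - i - 1) := by
      rw [← Nat.pow_succ']; congr 1; omega
    omega
  have h4 : (l / 2 ^ i + 2 ^ (t - i)) % 2 = l / 2 ^ i % 2 := by omega
  simp only [Nat.testBit_eq_decide_div_mod_eq, h2, h4]

lemma testBit_add_pow_self (l t : ℕ) : (l + 2 ^ t).testBit t = ! l.testBit t := by
  have h2 : (l + 2 ^ t) / 2 ^ t = l / 2 ^ t + 1 := by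
    have := Nat.add_mul_div_right l (1 : ℕ) (Nat.pow_pos (n := t) (show 0 < 2 by norm_num))
    simpa using this
  simp only [Nat.testBit_eq_decide_div_mod_eq, h2]
  have h : l / 2 ^ t % 2 = 0 ∨ l / 2 ^ t % 2 = 1 := by omega
  rcases h with h | h
  · have h1 : (l / 2 ^ t + 1) % 2 = 1 := by omega
    simp [h, h1]
  · have h1 : (l / 2 ^ t + 1) % 2 = 0 := by omega
    simp [h, h1]

lemma testBit_top {k t : ℕ} (h1 : 2 ^ t ≤ k) (h2 : k < 2 ^ (t + 1)) : k.testBit t = true := by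
  have h3 : k / 2 ^ t = 1 := by
    apply Nat.div_eq_of_lt_le (by simpa using h1)
    rw [pow_succ] at h2; omega
  simp [Nat.testBit_eq_decide_div_mod_eq, h3]

lemma bitSub_small_add {k' t : ℕ} (hk : k' < 2 ^ t) (l : ℕ) :
    bitSub k' (l + 2 ^ t) ↔ bitSub k' l := by
  unfold bitSub
  have hb : ∀ i, k'.testBit i = true → i < t := by
    intro i hi
    by_contra h
    push_neg at h
    have : k' < 2 ^ i := lt_of_lt_of_le hk (Nat.pow_le_pow_right (by norm_num) h)
    rw [Nat.testBit_lt_two_pow this] at hi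
    exact Bool.false_ne_true hi
  constructor
  · intro h i hi
    have := h i hi
    rwa [testBit_add_pow_lt (hb i hi)] at this
  · intro h i hi
    rw [testBit_add_pow_lt (hb i hi)]
    exact h i hi

lemma bitSub_split {k t : ℕ} (h1 : 2 ^ t ≤ k) (h2 : k < 2 ^ (t + 1)) (m : ℕ) :
    bitSub k m ↔ (bitSub (k - 2 ^ t) m ∧ m.testBit t = true) := by
  set k' := k - 2 ^ t with hk'
  have hkk : k = k' + 2 ^ t := by omega
  have hk'lt : k' < 2 ^ t := by rw [pow_succ] at h2; omega
  have hbk' : ∀ i, k'.testBit i = true → i < t := by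
    intro i hi
    by_contra h
    push_neg at h
    have : k' < 2 ^ i := lt_of_lt_of_le hk'lt (Nat.pow_le_pow_right (by norm_num) h)
    rw [Nat.testBit_lt_two_pow this] at hi
    exact Bool.false_ne_true hi
  unfold bitSub
  constructor
  · intro h
    constructor
    · intro i hi
      apply h i
      rw [hkk, testBit_add_pow_lt (hbk' i hi)]
      exact hi
    · apply h t
      rw [hkk, testBit_add_pow_self, Nat.testBit_lt_two_pow hk'lt]
      rfl
  · rintro ⟨ha, hb⟩ i hi
    rcases lt_trichotomy i t with h | h | h
    · apply ha
      rwa [hkk, testBit_add_pow_lt h] at hi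
    · subst h; exact hb
    · exfalso
      have : k < 2 ^ i := lt_of_lt_of_le h2 (Nat.pow_le_pow_right (by norm_num) h)
      rw [Nat.testBit_lt_two_pow this] at hi
      exact Bool.false_ne_true hi

lemma signPar (n : ℕ) : (-1 : ℤ) ^ n = 1 - 2 * ((n % 2 : ℕ) : ℤ) := by
  rcases Nat.even_or_odd n with h | h
  · rw [h.neg_one_pow, Nat.even_iff.mp h]; norm_num
  · rw [h.neg_one_pow, Nat.odd_iff.mp h]; norm_num

/-- Key "Lemma A". -/
lemma lemA {k t : ℕ} (h1 : 2 ^ t ≤ k) (h2 : k < 2 ^ (t + 1)) (l : ℕ) :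
    (-1 : ℤ) ^ ((l + 2 ^ t).choose k) + (-1) ^ (l.choose k)
      = 1 + (-1) ^ (l.choose (k - 2 ^ t)) := by
  have e1 : bitSub k (l + 2 ^ t) ↔ (bitSub (k - 2 ^ t) l ∧ l.testBit t = false) := by
    rw [bitSub_split h1 h2,
      bitSub_small_add (show k - 2 ^ t < 2 ^ t by rw [pow_succ] at h2; omega),
      testBit_add_pow_self]
    simp
  have e2 : bitSub k l ↔ (bitSub (k - 2 ^ t) l ∧ l.testBit t = true) := bitSub_split h1 h2 l
  rw [signPar, signPar, signPar, choose_parity, choose_parity, choose_parity]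
  by_cases hc : bitSub (k - 2 ^ t) l <;>
    rcases Bool.eq_false_or_eq_true (l.testBit t) with hbt | hbt <;>
      simp [e1, e2, hc, hbt]


/-- Shift operator on integer sequences. -/
noncomputable def Sh : Module.End ℤ (ℕ → ℤ) :=
  { toFun := fun a n => a (n + 1)
    map_add' := fun _ _ => rfl
    map_smul' := fun _ _ => rfl }

@[simp] lemma Sh_apply (a : ℕ → ℤ) (n : ℕ) : Sh a n = a (n + 1) := rfl

lemma Sh_pow_apply (i : ℕ) (a : ℕ → ℤ) (n : ℕ) : (Sh ^ i) a n = a (n + i) := by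
  induction i generalizing a n with
  | zero => simp
  | succ i IH =>
    rw [pow_succ]
    show (Sh ^ i) (Sh a) n = a (n + (i + 1))
    rw [IH]
    simp [add_assoc]

/-- Binomial transform operator. -/
noncomputable def Psi : Module.End ℤ (ℕ → ℤ) :=
  { toFun := fun c n => ∑ l ∈ Finset.range (n + 1), c l * (n.choose l : ℤ)
    map_add' := fun a b => by
      funext n
      simp [add_mul, Finset.sum_add_distrib]
    map_smul' := fun r a => by
      funext n
      simp [Finset.mul_sum, mul_assoc] }

lemma Psi_apply (c : ℕ → ℤ) (n : ℕ) :
    Psi c n = ∑ l ∈ Finset.range (n + 1), c l * (n.choose l : ℤ) := rfl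

lemma Sh_comm_Psi : Sh * Psi = Psi * (Sh + 1) := by
  ext c n
  show Psi c (n + 1) = Psi (Sh c + c) n
  rw [Psi_apply, Psi_apply]
  have h1 : ∑ l ∈ Finset.range (n + 1 + 1), c l * ((n + 1).choose l : ℤ)
      = (∑ l ∈ Finset.range (n + 1), c (l + 1) * ((n + 1).choose (l + 1) : ℤ))
        + c 0 * ((n + 1).choose 0 : ℤ) :=
    Finset.sum_range_succ' (fun l => c l * ((n + 1).choose l : ℤ)) (n + 1)
  have h2 : ∀ l, c (l + 1) * ((n + 1).choose (l + 1) : ℤ)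
      = c (l + 1) * (n.choose l : ℤ) + c (l + 1) * (n.choose (l + 1) : ℤ) := by
    intro l
    rw [Nat.choose_succ_succ]
    push_cast
    ring
  have h3 : (∑ l ∈ Finset.range (n + 1), c (l + 1) * (n.choose (l + 1) : ℤ))
        + c 0 * (n.choose 0 : ℤ)
      = ∑ l ∈ Finset.range (n + 1 + 1), c l * (n.choose l : ℤ) :=
    (Finset.sum_range_succ' (fun l => c l * (n.choose l : ℤ)) (n + 1)).symm
  have h4 : ∑ l ∈ Finset.range (n + 1 + 1), c l * (n.choose l : ℤ)
      = ∑ l ∈ Finset.range (n + 1), c l * (n.choose l : ℤ) := by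
    rw [Finset.sum_range_succ, Nat.choose_eq_zero_of_lt (by omega)]
    push_cast
    ring
  rw [h1]
  simp only [h2]
  rw [Finset.sum_add_distrib]
  have h5 : ∀ l, (Sh c + c) l * (n.choose l : ℤ)
      = c (l + 1) * (n.choose l : ℤ) + c l * (n.choose l : ℤ) := by
    intro l
    simp [add_mul]
  simp only [h5]
  rw [Finset.sum_add_distrib]
  have h6 := h3.trans h4
  simp only [Nat.choose_zero_right] at h6 ⊢
  push_cast at h6 ⊢
  linarith

lemma Sh_pow_comm_Psi (i : ℕ) : Sh ^ i * Psi = Psi * (Sh + 1) ^ i := by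
  induction i with
  | zero => simp
  | succ i IH =>
    rw [pow_succ, pow_succ, mul_assoc, Sh_comm_Psi, ← mul_assoc, IH, mul_assoc]

lemma aeval_comm_Psi (p : Polynomial ℤ) :
    Polynomial.aeval Sh p * Psi = Psi * Polynomial.aeval (Sh + 1) p := by
  induction p using Polynomial.induction_on' with
  | add p q hp hq =>
    rw [map_add, map_add, add_mul, mul_add, hp, hq]
  | monomial i c =>
    rw [Polynomial.aeval_monomial, Polynomial.aeval_monomial]
    have halg : ∀ (A : Module.End ℤ (ℕ → ℤ)), (algebraMap ℤ (Module.End ℤ (ℕ → ℤ)) c) * A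
        = c • A := fun A => by
      rw [Algebra.algebraMap_eq_smul_one, smul_mul_assoc, one_mul]
    rw [halg, halg, smul_mul_assoc, Sh_pow_comm_Psi, mul_smul_comm]

lemma aeval_apply (p : Polynomial ℤ) (a : ℕ → ℤ) (n : ℕ) :
    Polynomial.aeval Sh p a n = p.sum fun i c => c * a (n + i) := by
  induction p using Polynomial.induction_on' with
  | add p q hp hq =>
    rw [map_add, Polynomial.sum_add_index _ _ _ (by simp) (by intros; ring)]
    show (Polynomial.aeval Sh p) a n + (Polynomial.aeval Sh q) a n = _
    rw [hp, hq]
  | monomial i c =>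
    rw [Polynomial.aeval_monomial, Polynomial.sum_monomial_index _ _ (by simp)]
    have : (algebraMap ℤ (Module.End ℤ (ℕ → ℤ)) c * Sh ^ i) a n
        = c • ((Sh ^ i) a n) := by
      rw [Algebra.algebraMap_eq_smul_one, smul_mul_assoc, one_mul]
      rfl
    rw [this, Sh_pow_apply]
    simp

lemma aeval_apply' (p : Polynomial ℤ) (a : ℕ → ℤ) (n M : ℕ) (h : p.natDegree < M) :
    Polynomial.aeval Sh p a n = ∑ i ∈ Finset.range M, p.coeff i * a (n + i) := by
  rw [aeval_apply, Polynomial.sum_over_range' _ (by simp) M h]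

lemma two_pow_sum (n : ℕ) : ∑ v ∈ Finset.range n, 2 ^ v = 2 ^ n - 1 := by
  induction n with
  | zero => simp
  | succ n IH =>
    rw [Finset.sum_range_succ, IH]
    have : 1 ≤ 2 ^ n := Nat.one_le_two_pow
    have h2 : (2:ℕ) ^ (n+1) = 2 * 2 ^ n := by rw [pow_succ]; ring
    omega

lemma sum_two_pow_bound {s : ℕ} (e : Fin s → ℕ) (hmono : StrictMono e)
    (h0 : ∀ i, 0 < e i) {t : ℕ} (ht : ∀ i, e i ≤ t) :
    ∑ i : Fin s, 2 ^ (e i) ≤ 2 ^ (t + 1) - 2 := by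
  have h1 : ∑ i : Fin s, 2 ^ (e i)
      = ∑ v ∈ Finset.image e Finset.univ, 2 ^ v :=
    (Finset.sum_image (fun x _ y _ h => hmono.injective h)).symm
  rw [h1]
  have h2 : Finset.image e Finset.univ ⊆ Finset.Ico 1 (t + 1) := by
    intro v hv
    simp only [Finset.mem_image] at hv
    obtain ⟨i, _, rfl⟩ := hv
    rw [Finset.mem_Ico]
    exact ⟨h0 i, Nat.lt_succ_of_le (ht i)⟩
  refine le_trans (Finset.sum_le_sum_of_subset h2) ?_
  have h3 : ∑ v ∈ Finset.Ico 0 1, (2:ℕ) ^ v + ∑ v ∈ Finset.Ico 1 (t+1), 2 ^ v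
      = ∑ v ∈ Finset.Ico 0 (t+1), 2 ^ v :=
    Finset.sum_Ico_consecutive _ (by omega) (by omega)
  have h4 : ∑ v ∈ Finset.Ico 0 (t+1), (2:ℕ) ^ v = 2 ^ (t+1) - 1 := by
    rw [← Finset.range_eq_Ico, two_pow_sum]
  have h5 : ∑ v ∈ Finset.Ico 0 1, (2:ℕ) ^ v = 1 := by simp
  have : 1 ≤ 2 ^ (t+1) := Nat.one_le_two_pow
  omega

lemma aeval_prod_const {s : ℕ} (e : Fin s → ℕ) : ∀ (μ : ℤ),
    (Polynomial.aeval Sh (∏ i : Fin s, ((1 : Polynomial ℤ) + X ^ (2 ^ (e i))))) (fun _ => μ)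
      = fun _ => 2 ^ s * μ := by
  induction s with
  | zero => intro μ; simp
  | succ s IH =>
    intro μ
    rw [Fin.prod_univ_castSucc, map_mul, Module.End.mul_apply]
    have hinner : (Polynomial.aeval Sh ((1 : Polynomial ℤ) + X ^ (2 ^ (e (Fin.last s))))) (fun _ => μ)
        = fun _ => 2 * μ := by
      funext l
      rw [map_add, map_one, map_pow, Polynomial.aeval_X]
      show (fun _ => μ) l + (Sh ^ (2 ^ (e (Fin.last s)))) (fun _ => μ) l = 2 * μ
      rw [Sh_pow_apply]
      ring
    rw [hinner, IH (fun i => e i.castSucc) (2 * μ)]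
    funext l
    ring

lemma keyB : ∀ (s : ℕ) (e : Fin s → ℕ) (k : ℕ), StrictMono e → (∀ i, 0 < e i) →
    (k = k % 2 + ∑ i : Fin s, 2 ^ (e i)) →
    (Polynomial.aeval Sh (∏ i : Fin s, ((1 : Polynomial ℤ) + X ^ (2 ^ (e i)))))
      (fun l => (-1 : ℤ) ^ (l.choose k))
    = fun l => (2 ^ s - 1) + (-1 : ℤ) ^ (l.choose (k % 2)) := by
  intro s
  induction s with
  | zero =>
    intro e k _ _ hk
    have hkk : k % 2 = k := by simpa using hk.symm
    rw [hkk]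
    simp
  | succ s IH =>
    intro e k hmono h0 hk
    set t := e (Fin.last s) with htdef
    have htle : ∀ i, e i ≤ t := fun i => hmono.monotone (Fin.le_last i)
    have hsum_split : ∑ i : Fin (s+1), 2 ^ (e i)
        = ∑ i : Fin s, 2 ^ (e i.castSucc) + 2 ^ t := Fin.sum_univ_castSucc _
    have h2t : 2 ^ t ≤ k := by
      have h1 : 2 ^ t ≤ ∑ i : Fin (s+1), 2 ^ (e i) :=
        Finset.single_le_sum (f := fun i => 2 ^ (e i)) (fun i _ => Nat.zero_le _)
          (Finset.mem_univ (Fin.last s))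
      omega
    have hklt : k < 2 ^ (t + 1) := by
      have h1 : ∑ i : Fin (s+1), 2 ^ (e i) ≤ 2 ^ (t+1) - 2 :=
        sum_two_pow_bound e hmono h0 htle
      have h2 : 2 ≤ 2 ^ (t+1) := by
        have : 2 ^ 1 ≤ 2 ^ (t+1) := Nat.pow_le_pow_right (by norm_num) (by omega)
        simpa using this
      omega
    have ht1 : 1 ≤ t := h0 (Fin.last s)
    have h2teven : 2 ^ t % 2 = 0 := by
      have : 2 ^ t = 2 * 2 ^ (t - 1) := by
        rw [← Nat.pow_succ']
        congr 1
        omega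
      omega
    set k' := k - 2 ^ t with hk'def
    have hk'mod : k' % 2 = k % 2 := by omega
    have hk' : k' = k' % 2 + ∑ i : Fin s, 2 ^ (e i.castSucc) := by omega
    rw [Fin.prod_univ_castSucc, map_mul, Module.End.mul_apply]
    have hinner : (Polynomial.aeval Sh ((1 : Polynomial ℤ) + X ^ (2 ^ t)))
        (fun l => (-1 : ℤ) ^ (l.choose k))
        = (fun _ => (1 : ℤ)) + (fun l => (-1 : ℤ) ^ (l.choose k')) := by
      funext l
      rw [map_add, map_one, map_pow, Polynomial.aeval_X]
      show (-1 : ℤ) ^ (l.choose k) + (Sh ^ (2 ^ t)) (fun l => (-1 : ℤ) ^ (l.choose k)) l = _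
      rw [Sh_pow_apply]
      have := lemA h2t hklt l
      show (-1 : ℤ) ^ (l.choose k) + (-1 : ℤ) ^ ((l + 2 ^ t).choose k)
          = 1 + (-1 : ℤ) ^ (l.choose k')
      rw [hk'def]
      linarith [this]
    rw [hinner, map_add, aeval_prod_const,
      IH (fun i => e i.castSucc) k' (hmono.comp Fin.strictMono_castSucc)
        (fun i => h0 _) hk']
    funext l
    show 2 ^ s * 1 + (2 ^ s - 1 + (-1 : ℤ) ^ (l.choose (k' % 2))) = _
    rw [hk'mod]
    ring


lemma sign_add (a b : ZMod 2) :
    (-1 : ℤ) ^ ((a + b).val) = (-1) ^ a.val * (-1) ^ b.val := by revert a b; decide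

lemma sign_natCast (n : ℕ) : (-1 : ℤ) ^ ((n : ZMod 2)).val = (-1) ^ n := by
  rw [ZMod.val_natCast, signPar, signPar]
  have : n % 2 % 2 = n % 2 := Nat.mod_mod_of_dvd n (dvd_refl 2)
  rw [this]

lemma zmod2_cases (a : ZMod 2) : a = 0 ∨ a = 1 := by revert a; decide

lemma sigma_eval {N k : ℕ} (x : Fin N → ZMod 2) :
    sigma N k x = ((wt x).choose k : ZMod 2) := by
  classical
  unfold sigma wt
  set S := Finset.univ.filter (fun i => x i = 1) with hS
  have hprod : ∀ A ∈ Finset.powersetCard k (Finset.univ : Finset (Fin N)),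
      ∏ i ∈ A, x i = if A ⊆ S then (1 : ZMod 2) else 0 := by
    intro A _
    by_cases h : A ⊆ S
    · rw [if_pos h]
      apply Finset.prod_eq_one
      intro i hi
      have := h hi
      rw [hS, Finset.mem_filter] at this
      exact this.2
    · rw [if_neg h]
      obtain ⟨i, hiA, hiS⟩ := Finset.not_subset.mp h
      apply Finset.prod_eq_zero hiA
      rw [hS, Finset.mem_filter] at hiS
      push_neg at hiS
      rcases zmod2_cases (x i) with h0 | h1
      · exact h0
      · exact absurd h1 (hiS (Finset.mem_univ i))
  rw [Finset.sum_congr rfl hprod, Finset.sum_boole]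
  have hfilter : (Finset.powersetCard k (Finset.univ : Finset (Fin N))).filter (· ⊆ S)
      = Finset.powersetCard k S := by
    ext A
    simp only [Finset.mem_filter, Finset.mem_powersetCard]
    constructor
    · rintro ⟨⟨_, hc⟩, hsub⟩; exact ⟨hsub, hc⟩
    · rintro ⟨hsub, hc⟩; exact ⟨⟨Finset.subset_univ A, hc⟩, hsub⟩
  rw [hfilter, Finset.card_powersetCard]

lemma card_wt {n l : ℕ} :
    (Finset.univ.filter (fun z : Fin n → ZMod 2 => wt z = l)).card = n.choose l := by
  classical
  have := Finset.card_bij'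
    (i := fun (z : Fin n → ZMod 2) (_ : z ∈ Finset.univ.filter (fun z => wt z = l)) =>
      Finset.univ.filter (fun i => z i = 1))
    (j := fun (A : Finset (Fin n)) (_ : A ∈ Finset.powersetCard l Finset.univ) =>
      (fun i => if i ∈ A then (1 : ZMod 2) else 0))
    (hi := by
      intro z hz
      rw [Finset.mem_filter] at hz
      rw [Finset.mem_powersetCard]
      exact ⟨Finset.subset_univ _, hz.2⟩)
    (hj := by
      intro A hA
      rw [Finset.mem_powersetCard] at hA
      rw [Finset.mem_filter]
      refine ⟨Finset.mem_univ _, ?_⟩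
      show wt (fun i => if i ∈ A then (1 : ZMod 2) else 0) = l
      unfold wt
      have heq : Finset.univ.filter (fun i => (if i ∈ A then (1 : ZMod 2) else 0) = 1) = A := by
        ext i
        simp only [Finset.mem_filter, Finset.mem_univ, true_and]
        by_cases h : i ∈ A
        · simp [h]
        · simpa [h] using (show ¬(0 : ZMod 2) = 1 by decide)
      rw [heq]
      exact hA.2)
    (left_inv := by
      intro z hz
      funext i
      by_cases h : z i = 1
      · simp [h]
      · simp only [Finset.mem_filter, Finset.mem_univ, true_and, h, if_false]
        rcases zmod2_cases (z i) with h0 | h1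
        · simp [h, h0]
        · exact absurd h1 h)
    (right_inv := by
      intro A hA
      ext i
      simp only [Finset.mem_filter, Finset.mem_univ, true_and]
      by_cases h : i ∈ A
      · simp [h]
      · simp only [h, if_neg, iff_false]
        simpa using (show (0 : ZMod 2) ≠ 1 by decide))
  rw [this, Finset.card_powersetCard]
  congr 1
  exact Finset.card_univ.trans (Fintype.card_fin n)


def splitEquiv (n j : ℕ) : ((Fin j → ZMod 2) × (Fin n → ZMod 2)) ≃ (Fin (n + j) → ZMod 2) where
  toFun p := fun v => if h : (v : ℕ) < j then p.1 ⟨v, h⟩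
    else p.2 ⟨(v : ℕ) - j, by have := v.isLt; omega⟩
  invFun x := (fun i => x (Fin.castLE (Nat.le_add_left j n) i),
    fun i => x ⟨j + i, by have := i.isLt; omega⟩)
  left_inv := by
    rintro ⟨y, z⟩
    refine Prod.ext ?_ ?_
    · funext i
      have h : ((Fin.castLE (Nat.le_add_left j n) i : Fin (n + j)) : ℕ) < j := i.isLt
      simp only [dif_pos h]
      exact congrArg y (Fin.ext (by simp))
    · funext i
      have h : ¬ ((⟨j + i, by have := i.isLt; omega⟩ : Fin (n + j)) : ℕ) < j := by simp
      simp only [dif_neg h]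
      exact congrArg z (Fin.ext (by simp))
  right_inv := by
    intro x
    funext v
    by_cases h : (v : ℕ) < j
    · simp only [dif_pos h]
      exact congrArg x (Fin.ext (by simp))
    · simp only [dif_neg h]
      refine congrArg x (Fin.ext ?_)
      have := v.isLt
      simp
      omega

lemma splitEquiv_castLE {n j : ℕ} (y : Fin j → ZMod 2) (z : Fin n → ZMod 2) (i : Fin j) :
    splitEquiv n j (y, z) (Fin.castLE (Nat.le_add_left j n) i) = y i := by
  have h : ((Fin.castLE (Nat.le_add_left j n) i : Fin (n + j)) : ℕ) < j := i.isLt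
  show (if h : _ < j then y ⟨_, h⟩ else _) = y i
  rw [dif_pos h]
  exact congrArg y (Fin.ext (by simp))

lemma splitEquiv_right {n j : ℕ} (y : Fin j → ZMod 2) (z : Fin n → ZMod 2) (i : Fin n)
    (hlt : j + (i : ℕ) < n + j) :
    splitEquiv n j (y, z) ⟨j + i, hlt⟩ = z i := by
  show (if h : (j + (i : ℕ)) < j then _ else z ⟨j + (i : ℕ) - j, _⟩) = z i
  rw [dif_neg (by omega)]
  exact congrArg z (Fin.ext (by simp))

def sumEquiv (n j : ℕ) : (Fin j ⊕ Fin n) ≃ Fin (n + j) where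
  toFun := Sum.elim (Fin.castLE (Nat.le_add_left j n))
    (fun i => ⟨j + i, by have := i.isLt; omega⟩)
  invFun v := if h : (v : ℕ) < j then Sum.inl ⟨v, h⟩
    else Sum.inr ⟨(v : ℕ) - j, by have := v.isLt; omega⟩
  left_inv := by
    rintro (i | i)
    · have h : ((Fin.castLE (Nat.le_add_left j n) i : Fin (n + j)) : ℕ) < j := i.isLt
      simp only [Sum.elim_inl, dif_pos h]
      exact (dif_pos h).trans (congrArg Sum.inl (Fin.ext rfl))
    · have h : ¬ ((⟨j + i, by have := i.isLt; omega⟩ : Fin (n + j)) : ℕ) < j := by simp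
      simp only [Sum.elim_inr, dif_neg h]
      exact (dif_neg h).trans (congrArg Sum.inr (Fin.ext (Nat.add_sub_cancel_left _ _)))
  right_inv := by
    intro v
    by_cases h : (v : ℕ) < j
    · simp only [dif_pos h, Sum.elim_inl]
      exact Fin.ext (by simp)
    · simp only [dif_neg h, Sum.elim_inr]
      refine Fin.ext ?_
      have := v.isLt
      simp
      omega

lemma sum_split {M : Type*} [AddCommMonoid M] {n j : ℕ} (φ : Fin (n + j) → M) :
    ∑ v : Fin (n + j), φ v
      = ∑ i : Fin j, φ (Fin.castLE (Nat.le_add_left j n) i)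
        + ∑ i : Fin n, φ ⟨j + i, by have := i.isLt; omega⟩ := by
  rw [← Fintype.sum_equiv (sumEquiv n j) (fun u => φ (sumEquiv n j u)) φ (fun u => rfl)]
  rw [Fintype.sum_sum_type]
  rfl

lemma wt_splitEquiv {n j : ℕ} (y : Fin j → ZMod 2) (z : Fin n → ZMod 2) :
    wt (splitEquiv n j (y, z)) = wt y + wt z := by
  classical
  unfold wt
  rw [Finset.card_filter, Finset.card_filter, Finset.card_filter]
  rw [sum_split (fun v => if splitEquiv n j (y, z) v = 1 then (1 : ℕ) else 0)]
  congr 1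
  · apply Finset.sum_congr rfl
    intro i _
    rw [splitEquiv_castLE y z i]
  · apply Finset.sum_congr rfl
    intro i _
    rw [splitEquiv_right y z i]

lemma sum_by_weight {n : ℕ} (g : ℕ → ℤ) :
    ∑ z : Fin n → ZMod 2, g (wt z)
      = ∑ l ∈ Finset.range (n + 1), (n.choose l : ℤ) * g l := by
  classical
  have hmaps : ∀ z : Fin n → ZMod 2, z ∈ Finset.univ → wt z ∈ Finset.range (n + 1) := by
    intro z _
    rw [Finset.mem_range]
    have : wt z ≤ n := by
      unfold wt
      calc (Finset.univ.filter (fun i => z i = 1)).card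
          ≤ (Finset.univ : Finset (Fin n)).card := Finset.card_filter_le _ _
        _ = n := by simp
    omega
  rw [← Finset.sum_fiberwise_of_maps_to hmaps (fun z => g (wt z))]
  apply Finset.sum_congr rfl
  intro l _
  have : ∀ z ∈ Finset.univ.filter (fun z : Fin n → ZMod 2 => wt z = l),
      g (wt z) = g l := by
    intro z hz
    rw [Finset.mem_filter] at hz
    rw [hz.2]
  rw [Finset.sum_congr rfl this, Finset.sum_const, card_wt]
  simp [mul_comm]

lemma sum_by_weight_F {j : ℕ} (F : (Fin j → ZMod 2) → ZMod 2) (ψ : ℕ → ℤ) :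
    ∑ y : Fin j → ZMod 2, (-1 : ℤ) ^ (F y).val * ψ (wt y)
      = ∑ m ∈ Finset.range (j + 1), coefC F m * ψ m := by
  classical
  have hmaps : ∀ y : Fin j → ZMod 2, y ∈ Finset.univ → wt y ∈ Finset.range (j + 1) := by
    intro y _
    rw [Finset.mem_range]
    have : wt y ≤ j := by
      unfold wt
      calc (Finset.univ.filter (fun i => y i = 1)).card
          ≤ (Finset.univ : Finset (Fin j)).card := Finset.card_filter_le _ _
        _ = j := by simp
    omega
  rw [← Finset.sum_fiberwise_of_maps_to hmaps (fun y => (-1 : ℤ) ^ (F y).val * ψ (wt y))]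
  apply Finset.sum_congr rfl
  intro m _
  unfold coefC
  rw [Finset.sum_mul]
  apply Finset.sum_congr rfl
  intro y hy
  rw [Finset.mem_filter] at hy
  rw [hy.2]

lemma expSum_eq_sum_coefC {j : ℕ} (F : (Fin j → ZMod 2) → ZMod 2) :
    expSum F = ∑ m ∈ Finset.range (j + 1), coefC F m := by
  have := sum_by_weight_F F (fun _ => 1)
  simpa [expSum] using this

lemma part1 {k j : ℕ} (F : (Fin j → ZMod 2) → ZMod 2) (n : ℕ) :
    expSum (fun x : Fin (n + j) → ZMod 2 =>
        sigma (n + j) k x + F (fun i => x (Fin.castLE (Nat.le_add_left j n) i)))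
    = ∑ l ∈ Finset.range (n + 1),
        (∑ m ∈ Finset.range (j + 1), coefC F m * (-1 : ℤ) ^ Nat.choose (l + m) k)
          * (n.choose l : ℤ) := by
  classical
  unfold expSum
  have hterm : ∀ x : Fin (n + j) → ZMod 2,
      (-1 : ℤ) ^ ((sigma (n + j) k x
          + F (fun i => x (Fin.castLE (Nat.le_add_left j n) i))).val)
      = (-1 : ℤ) ^ ((wt x).choose k)
        * (-1) ^ (F (fun i => x (Fin.castLE (Nat.le_add_left j n) i))).val := by
    intro x
    rw [sign_add, sigma_eval, sign_natCast]
  rw [Finset.sum_congr rfl (fun x _ => hterm x)]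
  rw [← Fintype.sum_equiv (splitEquiv n j)
    (fun p => (-1 : ℤ) ^ ((wt (splitEquiv n j p)).choose k)
      * (-1) ^ (F (fun i => splitEquiv n j p (Fin.castLE (Nat.le_add_left j n) i))).val)
    _ (fun p => rfl)]
  rw [Fintype.sum_prod_type]
  have hyz : ∀ (y : Fin j → ZMod 2) (z : Fin n → ZMod 2),
      (-1 : ℤ) ^ ((wt (splitEquiv n j (y, z))).choose k)
        * (-1) ^ (F (fun i => splitEquiv n j (y, z)
            (Fin.castLE (Nat.le_add_left j n) i))).val
      = (-1 : ℤ) ^ (F y).val * (-1) ^ ((wt y + wt z).choose k) := by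
    intro y z
    rw [wt_splitEquiv]
    have harg : (fun i => splitEquiv n j (y, z) (Fin.castLE (Nat.le_add_left j n) i)) = y :=
      funext (fun i => splitEquiv_castLE y z i)
    rw [harg]
    ring
  simp only [hyz]
  have hinner : ∀ y : Fin j → ZMod 2,
      ∑ z : Fin n → ZMod 2, (-1 : ℤ) ^ (F y).val * (-1) ^ ((wt y + wt z).choose k)
      = (-1 : ℤ) ^ (F y).val * ∑ l ∈ Finset.range (n + 1),
          (n.choose l : ℤ) * (-1) ^ ((wt y + l).choose k) := by
    intro y
    rw [← Finset.mul_sum]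
    congr 1
    exact sum_by_weight (fun w => (-1 : ℤ) ^ ((wt y + w).choose k))
  simp only [hinner]
  rw [sum_by_weight_F F (fun m => ∑ l ∈ Finset.range (n + 1),
    (n.choose l : ℤ) * (-1) ^ ((m + l).choose k))]
  simp only [Finset.mul_sum]
  rw [Finset.sum_comm]
  apply Finset.sum_congr rfl
  intro l _
  rw [Finset.sum_mul]
  apply Finset.sum_congr rfl
  intro m _
  rw [Nat.add_comm m l]
  ring

lemma Psi_zero_fun (n : ℕ) : Psi (fun _ => (0 : ℤ)) n = 0 := by
  rw [Psi_apply]; simp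

lemma Psi_vanish_alt (ν : ℤ) (n : ℕ) (hn : 1 ≤ n) :
    Psi (fun l => (-1 : ℤ) ^ l * ν) n = 0 := by
  rw [Psi_apply]
  have h : ∀ l, ((-1 : ℤ) ^ l * ν) * (n.choose l : ℤ) = ν * ((-1) ^ l * (n.choose l : ℤ)) := by
    intro l; ring
  rw [Finset.sum_congr rfl (fun l _ => h l), ← Finset.mul_sum,
    Int.alternating_sum_range_choose, if_neg (by omega)]
  ring

lemma recurrence_of (p : Polynomial ℤ) (c b : ℕ → ℤ) (hp : p.Monic) (hb : b = Psi c)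
    (hvan : ∀ n, 1 ≤ n → Psi ((Polynomial.aeval (Sh + 1) p) c) n = 0) :
    ∀ n, 1 ≤ n → b (n + p.natDegree)
      = ∑ i ∈ Finset.range p.natDegree, (-(p.coeff i)) * b (n + i) := by
  intro n hn
  have h0 : ∑ i ∈ Finset.range (p.natDegree + 1), p.coeff i * b (n + i) = 0 := by
    rw [← aeval_apply' p b n (p.natDegree + 1) (by omega)]
    rw [hb, ← Module.End.mul_apply, aeval_comm_Psi, Module.End.mul_apply]
    exact hvan n hn
  rw [Finset.sum_range_succ, hp.coeff_natDegree, one_mul] at h0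
  have h1 : b (n + p.natDegree)
      = - ∑ i ∈ Finset.range p.natDegree, p.coeff i * b (n + i) := by linarith
  rw [h1, ← Finset.sum_neg_distrib]
  exact Finset.sum_congr rfl (fun i _ => by ring)

end AuxPerturbation

open Polynomial in
open Classical in
/-- The sequence `b_n = Σ_l (Σ_m C_m(F)(-1)^{C(l+m,k)}) C(n,l) = S(σ_{n+j,k}+F)`
satisfies the linear recurrence with characteristic polynomial
`f(X) = (X−2)^{ε(k)} Π_{l=1}^s Φ_{2^{a_l+1}}(X−1)`; if moreover `F` is balanced, it
satisfies the recurrence with characteristic polynomial `Π_{l=1}^s Φ_{2^{a_l+1}}(X−1)`,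
of degree `k̄ − 1 = 2^{a_s} + ⋯ + 2^{a₁}`. -/
theorem perturbation_recurrence
    (k j : ℕ) (hk : 1 < k) (hj : 1 ≤ j)
    (F : (Fin j → ZMod 2) → ZMod 2)
    (s : ℕ) (e : Fin s → ℕ) (he0 : ∀ i, 0 < e i) (hemono : StrictMono e)
    (hexp : 2 * (k / 2) + 1 = 1 + ∑ i : Fin s, 2 ^ e i)
    (ε : ℕ) (hε : ε = if ∃ t : ℕ, k = 2 ^ t then 0 else 1)
    (f g : Polynomial ℤ)
    (hf : f = (X - C 2) ^ ε *
      ∏ i : Fin s, (Polynomial.cyclotomic (2 ^ (e i + 1)) ℤ).comp (X - 1))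
    (hg : g = ∏ i : Fin s, (Polynomial.cyclotomic (2 ^ (e i + 1)) ℤ).comp (X - 1))
    (b : ℕ → ℤ)
    (hb : ∀ n : ℕ, b n =
      ∑ l ∈ Finset.range (n + 1),
        (∑ m ∈ Finset.range (j + 1), coefC F m * (-1 : ℤ) ^ Nat.choose (l + m) k) *
          (n.choose l : ℤ)) :
    (∀ n : ℕ, k ≤ n + j →
      b n = expSum (fun x : Fin (n + j) → ZMod 2 =>
        sigma (n + j) k x + F (fun i => x (Fin.castLE (Nat.le_add_left j n) i)))) ∧
    (∀ n : ℕ, 1 ≤ n →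
      b (n + f.natDegree) =
        ∑ i ∈ Finset.range f.natDegree, (-(f.coeff i)) * b (n + i)) ∧
    (expSum F = 0 →
      g.natDegree = (2 * (k / 2) + 1) - 1 ∧
      ∀ n : ℕ, 1 ≤ n →
        b (n + g.natDegree) =
          ∑ i ∈ Finset.range g.natDegree, (-(g.coeff i)) * b (n + i)) := by
  classical
  set c : ℕ → ℤ := fun l => ∑ m ∈ Finset.range (j + 1),
      coefC F m * (-1 : ℤ) ^ Nat.choose (l + m) k with hcdef
  have hbc : b = Psi c := by
    funext n
    rw [hb n, Psi_apply]
  set G : Polynomial ℤ := ∏ i : Fin s, ((1 : Polynomial ℤ) + X ^ (2 ^ (e i))) with hGdef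
  have hkdecomp : k = k % 2 + ∑ i : Fin s, 2 ^ (e i) := by omega
  have hGd := keyB s e k hemono he0 hkdecomp
  have hGc : (Polynomial.aeval Sh G) c = fun l => ∑ m ∈ Finset.range (j + 1),
      coefC F m * ((2 ^ s - 1) + (-1 : ℤ) ^ ((l + m).choose (k % 2))) := by
    have hc_sum : c = ∑ m ∈ Finset.range (j + 1),
        coefC F m • ((Sh ^ m) (fun l => (-1 : ℤ) ^ (l.choose k))) := by
      funext l
      rw [Finset.sum_apply]
      apply Finset.sum_congr rfl
      intro m _
      rw [Pi.smul_apply, Sh_pow_apply, smul_eq_mul]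
    rw [hc_sum, map_sum]
    funext l
    rw [Finset.sum_apply]
    apply Finset.sum_congr rfl
    intro m _
    rw [map_smul, Pi.smul_apply, smul_eq_mul]
    congr 1
    have hcomm : (Polynomial.aeval Sh G) ((Sh ^ m) (fun l => (-1 : ℤ) ^ (l.choose k)))
        = (Sh ^ m) ((Polynomial.aeval Sh G) (fun l => (-1 : ℤ) ^ (l.choose k))) := by
      have h2 : (Sh : Module.End ℤ (ℕ → ℤ)) ^ m
          = Polynomial.aeval Sh ((X : Polynomial ℤ) ^ m) := by
        rw [map_pow, Polynomial.aeval_X]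
      have h1 : Polynomial.aeval Sh G * Sh ^ m = Sh ^ m * Polynomial.aeval Sh G := by
        rw [h2, ← map_mul, ← map_mul, mul_comm]
      rw [← Module.End.mul_apply, h1, Module.End.mul_apply]
    rw [hcomm, hGd, Sh_pow_apply]
  have hSF : expSum F = ∑ m ∈ Finset.range (j + 1), coefC F m := expSum_eq_sum_coefC F
  have hX1 : ((X : Polynomial ℤ) - 1) = X - C 1 := by rw [Polynomial.C_1]
  have hcyc : ∀ i : Fin s, Polynomial.cyclotomic (2 ^ (e i + 1)) ℤ
      = (1 : Polynomial ℤ) + X ^ (2 ^ (e i)) := by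
    intro i
    rw [Polynomial.cyclotomic_prime_pow_eq_geom_sum Nat.prime_two,
      Finset.sum_range_succ, Finset.sum_range_one, pow_zero, pow_one]
  have hgG : g = G.comp (X - 1) := by
    rw [hg, hGdef, Polynomial.prod_comp]
    apply Finset.prod_congr rfl
    intro i _
    rw [hcyc i]
  have hXm : Polynomial.aeval (Sh + 1) ((X : Polynomial ℤ) - 1) = Sh := by
    rw [map_sub, Polynomial.aeval_X, map_one]
    abel
  have haevalg : Polynomial.aeval (Sh + 1) g = Polynomial.aeval Sh G := by
    rw [hgG, Polynomial.aeval_comp, hXm]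
  have hmono_factor : ∀ i : Fin s,
      ((Polynomial.cyclotomic (2 ^ (e i + 1)) ℤ).comp (X - 1)).Monic := by
    intro i
    apply Polynomial.Monic.comp (Polynomial.cyclotomic.monic _ ℤ)
    · rw [hX1]; exact Polynomial.monic_X_sub_C 1
    · rw [hX1, Polynomial.natDegree_X_sub_C]; exact one_ne_zero
  have hgmonic : g.Monic := by
    rw [hg]
    exact Polynomial.monic_prod_of_monic _ _ (fun i _ => hmono_factor i)
  have hfmonic : f.Monic := by
    rw [hf]
    exact ((Polynomial.monic_X_sub_C (2 : ℤ)).pow ε).mul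
      (Polynomial.monic_prod_of_monic _ _ (fun i _ => hmono_factor i))
  have hdeg_factor : ∀ i : Fin s,
      ((Polynomial.cyclotomic (2 ^ (e i + 1)) ℤ).comp (X - 1)).natDegree = 2 ^ (e i) := by
    intro i
    rw [Polynomial.natDegree_comp, Polynomial.natDegree_cyclotomic, hX1,
      Polynomial.natDegree_X_sub_C, mul_one,
      Nat.totient_prime_pow Nat.prime_two (Nat.succ_pos _)]
    simp
  have hdegg : g.natDegree = ∑ i : Fin s, 2 ^ (e i) := by
    rw [hg, Polynomial.natDegree_prod _ _ (fun i _ => (hmono_factor i).ne_zero)]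
    exact Finset.sum_congr rfl (fun i _ => hdeg_factor i)
  have hf' : f = (X - C 2) ^ ε * g := by rw [hf, hg]
  have hfdecomp : Polynomial.aeval (Sh + 1) f
      = (Sh - 1) ^ ε * Polynomial.aeval Sh G := by
    rw [hf', map_mul, map_pow, haevalg]
    congr 2
    rw [map_sub, Polynomial.aeval_X, Polynomial.aeval_C]
    have h2 : algebraMap ℤ (Module.End ℤ (ℕ → ℤ)) 2 = 2 := by simp
    rw [h2]
    have h3 : (2 : Module.End ℤ (ℕ → ℤ)) = 1 + 1 := one_add_one_eq_two.symm
    rw [h3]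
    abel
  -- the vanishing for f
  have hvanf : ∀ n, 1 ≤ n → Psi ((Polynomial.aeval (Sh + 1) f) c) n = 0 := by
    by_cases hpow : ∃ t : ℕ, k = 2 ^ t
    · -- k is a power of 2
      have hε0 : ε = 0 := by rw [hε, if_pos hpow]
      obtain ⟨t, hkt⟩ := hpow
      have ht1 : 1 ≤ t := by
        by_contra h
        push_neg at h
        interval_cases t
        omega
      have keven : k % 2 = 0 := by
        have h4 : k = 2 * 2 ^ (t - 1) := by
          rw [hkt, ← Nat.pow_succ']
          congr 1
          omega
        omega
      have hs1 : s = 1 := by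
        have hsum : ∑ i : Fin s, 2 ^ (e i) = k := by omega
        have hk2 : 2 ≤ k := hk
        match s, e, he0, hemono, hsum with
        | 0, e, he0, hemono, hsum => simp at hsum; omega
        | 1, e, he0, hemono, hsum => rfl
        | (s'' + 2), e, he0, hemono, hsum =>
          exfalso
          set E := e (Fin.last (s'' + 1)) with hE
          have hub : ∑ i : Fin (s'' + 2), 2 ^ (e i) ≤ 2 ^ (E + 1) - 2 :=
            sum_two_pow_bound e hemono he0 (fun i => hemono.monotone (Fin.le_last i))
          have hlb : 2 ^ (e (Fin.castSucc 0)) + 2 ^ E ≤ ∑ i : Fin (s'' + 2), 2 ^ (e i) := by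
            rw [Fin.sum_univ_castSucc, ← hE]
            have : 2 ^ (e (Fin.castSucc 0)) ≤ ∑ i : Fin (s'' + 1), 2 ^ (e (Fin.castSucc i)) :=
              Finset.single_le_sum (f := fun i : Fin (s'' + 1) => 2 ^ (e (Fin.castSucc i)))
                (fun i _ => Nat.zero_le _) (Finset.mem_univ 0)
            omega
          have h20 : 2 ≤ 2 ^ (e (Fin.castSucc 0)) := by
            have := he0 (Fin.castSucc 0)
            calc (2 : ℕ) = 2 ^ 1 := by norm_num
              _ ≤ 2 ^ (e (Fin.castSucc 0)) := Nat.pow_le_pow_right (by norm_num) this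
          have hEt : E < t := by
            rw [← Nat.pow_lt_pow_iff_right (a := 2) (by norm_num)]
            omega
          have : 2 ^ (E + 1) ≤ 2 ^ t := Nat.pow_le_pow_right (by norm_num) (by omega)
          omega
      have hzero : (Polynomial.aeval Sh G) c = (fun _ => (0 : ℤ)) := by
        rw [hGc]
        funext l
        apply Finset.sum_eq_zero
        intro m _
        rw [keven, Nat.choose_zero_right, pow_one, hs1]
        norm_num
      intro n hn
      rw [hfdecomp, Module.End.mul_apply, hzero, hε0, pow_zero, Module.End.one_apply]
      exact Psi_zero_fun n
    · -- k is not a power of 2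
      have hε1 : ε = 1 := by rw [hε, if_neg hpow]
      rcases Nat.even_or_odd k with hkpar | hkpar
      · -- k even
        have keven : k % 2 = 0 := Nat.even_iff.mp hkpar
        have hconst : (Polynomial.aeval Sh G) c
            = fun _ => ∑ m ∈ Finset.range (j + 1), coefC F m * (2 ^ s - 2) := by
          rw [hGc]
          funext l
          apply Finset.sum_congr rfl
          intro m _
          rw [keven, Nat.choose_zero_right, pow_one]
          ring
        intro n hn
        rw [hfdecomp, Module.End.mul_apply, hconst, hε1, pow_one]
        have : ((Sh - 1 : Module.End ℤ (ℕ → ℤ))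
            (fun _ => ∑ m ∈ Finset.range (j + 1), coefC F m * (2 ^ s - 2)))
            = fun _ => (0 : ℤ) := by
          funext l
          rw [LinearMap.sub_apply, Pi.sub_apply, Module.End.one_apply]
          show (∑ m ∈ Finset.range (j + 1), coefC F m * (2 ^ s - 2))
            - (∑ m ∈ Finset.range (j + 1), coefC F m * (2 ^ s - 2)) = 0
          ring
        rw [this]
        exact Psi_zero_fun n
      · -- k odd
        have kodd : k % 2 = 1 := Nat.odd_iff.mp hkpar
        intro n hn
        rw [hfdecomp, Module.End.mul_apply, hε1, pow_one]
        have hν : (Sh - 1) ((Polynomial.aeval Sh G) c)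
            = fun l => (-1 : ℤ) ^ l
              * (∑ m ∈ Finset.range (j + 1), coefC F m * (-2) * (-1) ^ m) := by
          funext l
          rw [LinearMap.sub_apply, Pi.sub_apply, Module.End.one_apply, hGc, Sh_apply]
          show (∑ m ∈ Finset.range (j + 1),
              coefC F m * ((2 ^ s - 1) + (-1 : ℤ) ^ ((l + 1 + m).choose (k % 2))))
            - (∑ m ∈ Finset.range (j + 1),
              coefC F m * ((2 ^ s - 1) + (-1 : ℤ) ^ ((l + m).choose (k % 2)))) = _
          rw [← Finset.sum_sub_distrib, Finset.mul_sum]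
          apply Finset.sum_congr rfl
          intro m _
          rw [kodd, Nat.choose_one_right, Nat.choose_one_right]
          have hp1 : (-1 : ℤ) ^ (l + 1 + m) = (-1) ^ l * (-1) * (-1) ^ m := by
            rw [pow_add, pow_succ]
          have hp2 : (-1 : ℤ) ^ (l + m) = (-1) ^ l * (-1) ^ m := by rw [pow_add]
          rw [hp1, hp2]
          ring
        rw [hν]
        exact Psi_vanish_alt _ n hn
  refine ⟨?_, ?_, ?_⟩
  · intro n _
    exact (hb n).trans (part1 F n).symm
  · exact recurrence_of f c b hfmonic hbc hvanf
  · intro hSF0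
    have hsumκ : ∑ m ∈ Finset.range (j + 1), coefC F m = 0 := by
      rw [← hSF]; exact hSF0
    constructor
    · rw [hdegg]; omega
    · apply recurrence_of g c b hgmonic hbc
      intro n hn
      rw [haevalg]
      rcases Nat.even_or_odd k with hkpar | hkpar
      · have keven : k % 2 = 0 := Nat.even_iff.mp hkpar
        have hzero : (Polynomial.aeval Sh G) c = fun _ => (0 : ℤ) := by
          rw [hGc]
          funext l
          have : ∀ m ∈ Finset.range (j + 1),
              coefC F m * ((2 ^ s - 1) + (-1 : ℤ) ^ ((l + m).choose (k % 2)))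
              = coefC F m * (2 ^ s - 2) := by
            intro m _
            rw [keven, Nat.choose_zero_right, pow_one]
            ring
          rw [Finset.sum_congr rfl this, ← Finset.sum_mul, hsumκ]
          ring
        rw [hzero]
        exact Psi_zero_fun n
      · have kodd : k % 2 = 1 := Nat.odd_iff.mp hkpar
        have hval : (Polynomial.aeval Sh G) c
            = fun l => (-1 : ℤ) ^ l
              * (∑ m ∈ Finset.range (j + 1), coefC F m * (-1) ^ m) := by
          rw [hGc]
          funext l
          have hterm : ∀ m ∈ Finset.range (j + 1),
              coefC F m * ((2 ^ s - 1) + (-1 : ℤ) ^ ((l + m).choose (k % 2)))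
              = coefC F m * (2 ^ s - 1) + (-1 : ℤ) ^ l * (coefC F m * (-1) ^ m) := by
            intro m _
            rw [kodd, Nat.choose_one_right, pow_add]
            ring
          rw [Finset.sum_congr rfl hterm, Finset.sum_add_distrib, ← Finset.sum_mul, hsumκ,
            ← Finset.mul_sum]
          ring
        rw [hval]
        exact Psi_vanish_alt _ n hn
end

section
/- Let k and n be positive integers. Then Σ_{l=0}^{n} (-1)^{C(l,2k+1)} · (1 − (-1)^{C(l,2k)}) · C(n,l) = Σ_{l=0}^{n−1} (-1)^{C(l,2k)} · (1 − (-1)^{C(l,2k−1)}) · C(n−1,l). -/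
/-- Lucas mod 2: an even choose an odd is even. -/
lemma choose_even_odd_even (l m : ℕ) (hl : l % 2 = 0) (hm : m % 2 = 1) :
    Nat.choose l m % 2 = 0 := by
  have h := Choose.choose_modEq_choose_mod_mul_choose_div_nat (n := l) (k := m) (p := 2)
  rw [hl, hm] at h
  simpa [Nat.ModEq] using h

/-- Lucas mod 2: for odd `l` and even `m`, `C(l,m)` and `C(l,m+1)` have the same parity. -/
lemma choose_odd_even_parity (l m : ℕ) (hl : l % 2 = 1) (hm : m % 2 = 0) :
    Nat.choose l m % 2 = Nat.choose l (m + 1) % 2 := by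
  have h1 := Choose.choose_modEq_choose_mod_mul_choose_div_nat (n := l) (k := m) (p := 2)
  have h2 := Choose.choose_modEq_choose_mod_mul_choose_div_nat (n := l) (k := m + 1) (p := 2)
  have hm1 : (m + 1) % 2 = 1 := by omega
  have hd : (m + 1) / 2 = m / 2 := by omega
  rw [hl, hm] at h1
  rw [hl, hm1, hd] at h2
  simp only [Nat.choose_self, Nat.choose_zero_right, one_mul] at h1 h2
  exact h1.trans h2.symm

lemma key_parity (k l : ℕ) (hk : 1 ≤ k) (hodd : Nat.choose l (2 * k - 1) % 2 = 1) :
    Nat.choose l (2 * k) % 2 = Nat.choose l (2 * k + 1) % 2 := by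
  have hlo : l % 2 = 1 := by
    rcases Nat.even_or_odd l with he | ho
    · have := choose_even_odd_even l (2 * k - 1) (Nat.even_iff.mp he) (by omega)
      omega
    · exact Nat.odd_iff.mp ho
  exact choose_odd_even_parity l (2 * k) hlo (by omega)

lemma neg_one_pow_congr' (a b : ℕ) (h : a % 2 = b % 2) : (-1 : ℤ) ^ a = (-1 : ℤ) ^ b := by
  rcases Nat.even_or_odd a with ha | ha
  · have hb : Even b := by rw [Nat.even_iff] at *; omega
    rw [ha.neg_one_pow, hb.neg_one_pow]
  · have hb : Odd b := by rw [Nat.odd_iff] at *; omega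
    rw [ha.neg_one_pow, hb.neg_one_pow]

lemma pointwise (k l : ℕ) (hk : 1 ≤ k) :
    (-1 : ℤ) ^ Nat.choose l (2 * k + 1) * (1 - (-1 : ℤ) ^ Nat.choose l (2 * k))
      + (-1 : ℤ) ^ Nat.choose (l + 1) (2 * k + 1)
        * (1 - (-1 : ℤ) ^ Nat.choose (l + 1) (2 * k))
    = (-1 : ℤ) ^ Nat.choose l (2 * k) * (1 - (-1 : ℤ) ^ Nat.choose l (2 * k - 1)) := by
  have e1 : Nat.choose (l + 1) (2 * k + 1) = Nat.choose l (2 * k) + Nat.choose l (2 * k + 1) :=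
    Nat.choose_succ_succ l (2 * k)
  have e2 : Nat.choose (l + 1) (2 * k) = Nat.choose l (2 * k - 1) + Nat.choose l (2 * k) := by
    have h : 2 * k = (2 * k - 1) + 1 := by omega
    rw [h]; exact Nat.choose_succ_succ l (2 * k - 1)
  set A := (-1 : ℤ) ^ Nat.choose l (2 * k + 1) with hA
  set B := (-1 : ℤ) ^ Nat.choose l (2 * k) with hB
  set C := (-1 : ℤ) ^ Nat.choose l (2 * k - 1) with hC
  have hB2 : B * B = 1 := by
    rw [hB, ← pow_add]
    exact Even.neg_one_pow ⟨Nat.choose l (2 * k), rfl⟩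
  have f1 : (-1 : ℤ) ^ Nat.choose (l + 1) (2 * k + 1) = B * A := by
    rw [e1, pow_add]
  have f2 : (-1 : ℤ) ^ Nat.choose (l + 1) (2 * k) = C * B := by
    rw [e2, pow_add]
  rw [f1, f2]
  clear_value A B C
  rcases Nat.even_or_odd (Nat.choose l (2 * k - 1)) with hc | hc
  · have hC1 : C = 1 := by rw [hC]; exact hc.neg_one_pow
    rw [hC1]
    linear_combination (-A) * hB2
  · have hC1 : C = -1 := by rw [hC]; exact hc.neg_one_pow
    have hAB : A = B := by
      rw [hA, hB]
      exact (neg_one_pow_congr' _ _ (key_parity k l hk (Nat.odd_iff.mp hc))).symm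
    rw [hC1, hAB]
    linear_combination B * hB2

/-- For positive integers `k` and `n`,
`Σ_{l=0}^n (-1)^{C(l,2k+1)}(1−(-1)^{C(l,2k)})C(n,l)
 = Σ_{l=0}^{n−1} (-1)^{C(l,2k)}(1−(-1)^{C(l,2k−1)})C(n−1,l)`. -/
theorem binomial_sum_shift_identity (k n : ℕ) (hk : 1 ≤ k) (hn : 1 ≤ n) :
    ∑ l ∈ Finset.range (n + 1),
        (-1 : ℤ) ^ Nat.choose l (2 * k + 1) *
          (1 - (-1 : ℤ) ^ Nat.choose l (2 * k)) * (n.choose l : ℤ) =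
      ∑ l ∈ Finset.range n,
        (-1 : ℤ) ^ Nat.choose l (2 * k) *
          (1 - (-1 : ℤ) ^ Nat.choose l (2 * k - 1)) * ((n - 1).choose l : ℤ) := by
  obtain ⟨m, rfl⟩ : ∃ m, n = m + 1 := ⟨n - 1, by omega⟩
  simp only [Nat.add_sub_cancel]
  set f : ℕ → ℤ := fun l =>
    (-1 : ℤ) ^ Nat.choose l (2 * k + 1) * (1 - (-1 : ℤ) ^ Nat.choose l (2 * k)) with hf
  have step : ∑ l ∈ Finset.range (m + 1 + 1), f l * ((m + 1).choose l : ℤ)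
      = ∑ l ∈ Finset.range (m + 1), (f l + f (l + 1)) * (m.choose l : ℤ) := by
    rw [Finset.sum_range_succ' (fun l => f l * ((m + 1).choose l : ℤ)) (m + 1)]
    have pascal : ∀ l, ((m + 1).choose (l + 1) : ℤ) = m.choose l + m.choose (l + 1) := by
      intro l; exact_mod_cast Nat.choose_succ_succ m l
    simp only [pascal]
    have expand : ∀ l, f (l + 1) * ((m.choose l : ℤ) + m.choose (l + 1))
        = f (l + 1) * (m.choose l : ℤ) + f (l + 1) * (m.choose (l + 1) : ℤ) := fun l => by ring
    rw [Finset.sum_congr rfl fun l _ => expand l, Finset.sum_add_distrib]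
    have shift : ∑ l ∈ Finset.range (m + 1), f (l + 1) * (m.choose (l + 1) : ℤ)
        = ∑ l ∈ Finset.range (m + 1), f l * (m.choose l : ℤ) - f 0 * (m.choose 0 : ℤ) := by
      rw [eq_sub_iff_add_eq, ← Finset.sum_range_succ' (fun l => f l * (m.choose l : ℤ)) (m + 1),
        Finset.sum_range_succ]
      simp [Nat.choose_succ_self]
    rw [shift]
    simp only [Nat.choose_zero_right, Nat.cast_one, mul_one]
    have expand2 : ∀ l, (f l + f (l + 1)) * (m.choose l : ℤ)
        = f l * (m.choose l : ℤ) + f (l + 1) * (m.choose l : ℤ) := fun l => by ring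
    rw [Finset.sum_congr rfl fun l _ => expand2 l, Finset.sum_add_distrib]
    ring
  rw [step]
  apply Finset.sum_congr rfl
  intro l _
  rw [hf]
  simp only
  rw [pointwise k l hk]
end
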